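/- If C ∨ ℓ is cost-BC with respect to a CNF Γ and the literal ℓ, then cost(Γ) = cost(Γ ∪ {C ∨ ℓ}). -/
import Mathlib


namespace PaperMaxSAT

/-- Variables are natural numbers. -/
abbrev Var := ℕ

/-- A literal is a variable together with a polarity. -/
abbrev Lit := Var × Bool

/-- Negation of a literal. -/
def negLit (l : Lit) : Lit := (l.1, !l.2)

/-- A clause is a finite set of literals. -/
abbrev Clause := Finset Lit

/-- A CNF formula is a finite multiset of clauses. -/
abbrev CNF := Multiset Clause

/-- A tautological clause contains a literal together with its negation. -/
def isTaut (C : Clause) : Prop := ∃ l ∈ C, negLit l ∈ C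

/-- The value of a substitution at a variable: a Boolean constant or a literal. -/
abbrev SubVal := Bool ⊕ Lit

/-- Negation on substitution values. -/
def negSV : SubVal → SubVal
  | .inl b => .inl !b
  | .inr l => .inr (negLit l)

/-- A substitution maps each variable to `0`, `1` or a literal. -/
abbrev Sub := Var → SubVal

/-- Applying a substitution to a literal, respecting `σ(¬x) = ¬σ(x)`. -/
def appLit (σ : Sub) (l : Lit) : SubVal :=
  if l.2 then σ l.1 else negSV (σ l.1)

/-- The identity substitution. -/
def idSub : Sub := fun v => .inr (v, true)

/-- `σ(C) = 1` : some literal of `C` is mapped to true by `σ`. -/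
def clauseTrue (σ : Sub) (C : Clause) : Prop := ∃ l ∈ C, appLit σ l = Sum.inl true

instance (σ : Sub) (C : Clause) : Decidable (clauseTrue σ C) := by
  unfold clauseTrue; infer_instance

/-- `C↾σ` : the clause whose literals are the images under `σ` of the literals
of `C` mapped to literals (literals mapped to `0` are dropped). -/
def restrictClause (σ : Sub) (C : Clause) : Clause :=
  C.biUnion (fun l => match appLit σ l with
    | .inr m => {m}
    | _ => (∅ : Clause))

/-- `Γ↾σ` : restrict every clause of `Γ`; clauses mapped to `1` are removed. -/
def restrictCNF (σ : Sub) (Γ : CNF) : CNF :=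
  (Γ.filter (fun C => ¬ clauseTrue σ C)).map (restrictClause σ)

/-- `σ ⊨ C` : `σ(C) = 1` or `σ(C)` is tautological. -/
def subSat (σ : Sub) (C : Clause) : Prop :=
  clauseTrue σ C ∨ isTaut (restrictClause σ C)

/-- The assignment `¬C`, setting all literals of `C` to false. -/
def negSub (C : Clause) : Sub := fun v =>
  if (v, true) ∈ C then .inl false
  else if (v, false) ∈ C then .inl true
  else .inr (v, true)

/-- The substitution setting the literal `l` to true and touching nothing else. -/
def litSub (l : Lit) : Sub := fun v => if v = l.1 then .inl l.2 else .inr (v, true)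

/-- Unit propagation derives the empty clause. -/
inductive UPFalse : CNF → Prop
  | empty {Γ : CNF} : (∅ : Clause) ∈ Γ → UPFalse Γ
  | step {Γ : CNF} (l : Lit) : ({l} : Clause) ∈ Γ →
      UPFalse (restrictCNF (litSub l) Γ) → UPFalse Γ

/-- The unit clauses `¬l` for `l ∈ C`. -/
def negUnits (C : Clause) : CNF := C.val.map (fun l => ({negLit l} : Clause))

/-- `Γ ⊢₁ C` : unit propagation on `Γ↾¬C` produces the empty clause. -/
def UPimplies (Γ : CNF) (C : Clause) : Prop := UPFalse (Γ + negUnits C)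

/-- `Γ ⊢₁ Δ` : `Γ ⊢₁ D` for every `D ∈ Δ`. -/
def UPimpliesAll (Γ Δ : CNF) : Prop := ∀ D ∈ Δ, UPimplies Γ D

/-- Total assignments. -/
abbrev TAssign := Var → Bool

/-- A total assignment satisfies a clause. -/
def satC (α : TAssign) (C : Clause) : Prop := ∃ l ∈ C, α l.1 = l.2

instance (α : TAssign) (C : Clause) : Decidable (satC α C) := by
  unfold satC; infer_instance

/-- A total assignment satisfies a CNF. -/
def satCNF (α : TAssign) (Γ : CNF) : Prop := ∀ C ∈ Γ, satC α C

/-- `τ ∘ σ` : composition of a total assignment with a substitution. -/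
def comp (τ : TAssign) (σ : Sub) : TAssign := fun v =>
  match σ v with
  | .inl b => b
  | .inr l => if l.2 then τ l.1 else !(τ l.1)

/-- `τ` extends the assignment `¬C`. -/
def extendsNeg (τ : TAssign) (C : Clause) : Prop := ∀ l ∈ C, τ l.1 = !l.2

/-- The cost of a total assignment w.r.t. a set `B` of blocking variables:
the number of blocking variables set to true. -/
def cost (B : Finset Var) (α : TAssign) : ℕ := (B.filter (fun b => α b = true)).card

/-- The cost of a MaxSAT instance encoded with blocking variables `B`:
the minimum cost of a satisfying total assignment. -/
noncomputable def costCNF (B : Finset Var) (Γ : CNF) : ℕ :=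
  sInf {k | ∃ α : TAssign, satCNF α Γ ∧ cost B α = k}

/-- `σ` witnesses that `C` is cost-SR w.r.t. `Γ` (with blocking variables `B`):
the redundancy condition `Γ↾¬C ⊢₁ (Γ ∪ {C})↾σ` and the cost condition. -/
def CostSRwit (B : Finset Var) (Γ : CNF) (C : Clause) (σ : Sub) : Prop :=
  UPimpliesAll (restrictCNF (negSub C) Γ) (restrictCNF σ (C ::ₘ Γ)) ∧
  ∀ τ : TAssign, extendsNeg τ C → cost B (comp τ σ) ≤ cost B τ

/-- `C` is cost-SR w.r.t. `Γ`. -/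
def CostSR (B : Finset Var) (Γ : CNF) (C : Clause) : Prop := ∃ σ, CostSRwit B Γ C σ

/-- A substitution which is an assignment: every value is `0`, `1`,
or the variable itself. -/
def isAssign (σ : Sub) : Prop :=
  ∀ v, σ v = .inl true ∨ σ v = .inl false ∨ σ v = .inr (v, true)

/-- The variables of a clause. -/
def varsClause (C : Clause) : Finset Var := C.image Prod.fst

/-- The variables of a CNF. -/
def varsCNF (Γ : CNF) : Finset Var := (Γ.map varsClause).sup

/-- Membership in the domain of an assignment. -/
def subDom (σ : Sub) (v : Var) : Prop := ∃ b : Bool, σ v = .inl b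

/-- `C` is cost-PR w.r.t. `Γ`: cost-SR witnessed by an assignment. -/
def CostPR (B : Finset Var) (Γ : CNF) (C : Clause) : Prop :=
  ∃ σ, CostSRwit B Γ C σ ∧ isAssign σ

/-- `C` is cost-SPR w.r.t. `Γ`: cost-SR witnessed by an assignment with
domain `dom(¬C) = Var(C)`. -/
def CostSPR (B : Finset Var) (Γ : CNF) (C : Clause) : Prop :=
  ∃ σ, CostSRwit B Γ C σ ∧ isAssign σ ∧ (∀ v, subDom σ v ↔ v ∈ varsClause C)

/-- `C` is cost-LPR w.r.t. `Γ`: cost-SR witnessed by an assignment with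
domain `dom(¬C)` differing from `¬C` on exactly one variable. -/
def CostLPR (B : Finset Var) (Γ : CNF) (C : Clause) : Prop :=
  ∃ σ, CostSRwit B Γ C σ ∧ isAssign σ ∧ (∀ v, subDom σ v ↔ v ∈ varsClause C) ∧
    ((varsClause C).filter (fun v => σ v ≠ negSub C v)).card = 1

/-- `D` is a resolvent of `E₁` and `E₂`. -/
def resolvent (D E₁ E₂ : Clause) : Prop :=
  ∃ x : Var, (x, true) ∈ E₁ ∧ (x, false) ∈ E₂ ∧
    D = E₁.erase (x, true) ∪ E₂.erase (x, false)

/-- A derivation from `Γ` in the calculus with redundancy rule `Red`: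
every clause of the list is in `Γ`, a weakening of an earlier clause,
a resolvent of two earlier clauses, or redundant (w.r.t. `Red`) relative to
`Γ` together with the earlier clauses, using no new variables. -/
def IsDeriv (Red : Finset Var → CNF → Clause → Prop) (B : Finset Var) (Γ : CNF)
    (L : List Clause) : Prop :=
  ∀ i, ∀ hi : i < L.length,
    L[i] ∈ Γ ∨
    (∃ j, ∃ hj : j < i, L[j]'(hj.trans hi) ⊆ L[i]) ∨
    (∃ j k, ∃ hj : j < i, ∃ hk : k < i,
      resolvent L[i] (L[j]'(hj.trans hi)) (L[k]'(hk.trans hi))) ∨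
    (Red B (Γ + (↑(L.take i) : CNF)) L[i] ∧ varsClause L[i] ⊆ varsCNF Γ)

/-- `C ∨ ℓ` is a cost blocked clause (cost-BC) w.r.t. `Γ` and `ℓ`. -/
def CostBC (B : Finset Var) (Γ : CNF) (C : Clause) (l : Lit) : Prop :=
  (∀ D ∈ Γ, negLit l ∈ D → isTaut (C ∪ D.erase (negLit l))) ∧
  ¬(l.2 = true ∧ l.1 ∈ B)

/-- Hamming distance between two total assignments, over the variables in `V`. -/
def HD (V : Finset Var) (α β : TAssign) : ℕ := (V.filter (fun v => α v ≠ β v)).card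

/-- `flip(C, σ) ≥ d` : some total assignment `τ` extending `¬C` has
Hamming distance (over `V`) at least `d` from `τ ∘ σ`. -/
def flipGE (V : Finset Var) (C : Clause) (σ : Sub) (d : ℕ) : Prop :=
  ∃ τ : TAssign, extendsNeg τ C ∧ d ≤ HD V τ (comp τ σ)


/-- if `C ∨ ℓ` is cost-BC w.r.t. `Γ` and `ℓ`, then
`cost(Γ) = cost(Γ ∪ {C ∨ ℓ})`. -/
theorem costBC_preserves_cost (B : Finset Var) (Γ : CNF) (C : Clause) (l : Lit)
    (h : CostBC B Γ C l) :
    costCNF B Γ = costCNF B (insert l C ::ₘ Γ) := by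
  obtain ⟨hblock, hcost⟩ := h
  have key : ∀ α : TAssign, satCNF α Γ →
      ∃ β : TAssign, satCNF β (insert l C ::ₘ Γ) ∧ cost B β ≤ cost B α := by
    intro α hα
    by_cases hs : satC α (insert l C)
    · refine ⟨α, ?_, le_refl _⟩
      intro D hD
      rcases Multiset.mem_cons.1 hD with rfl | hD
      · exact hs
      · exact hα D hD
    · -- α falsifies every literal of insert l C
      have hαfalse : ∀ m ∈ insert l C, α m.1 = !m.2 := by
        intro m hm
        by_contra h'
        apply hs
        refine ⟨m, hm, ?_⟩
        cases hb : α m.1 <;> cases hm2 : m.2 <;> simp_all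
      set β : TAssign := Function.update α l.1 l.2 with hβ
      have hβl : β l.1 = l.2 := Function.update_self _ _ _
      have hagree : ∀ v, v ≠ l.1 → β v = α v := by
        intro v hv; simp [hβ, Function.update_of_ne hv]
      have hαl : α l.1 = !l.2 := hαfalse l (Finset.mem_insert_self _ _)
      refine ⟨β, ?_, ?_⟩
      · intro D hD
        rcases Multiset.mem_cons.1 hD with rfl | hD
        · exact ⟨l, Finset.mem_insert_self _ _, hβl⟩
        · obtain ⟨m, hm, hαm⟩ := hα D hD
          by_cases hm1 : m.1 = l.1
          · -- m must be negLit l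
            have hmeq : m = negLit l := by
              have : m.2 = !l.2 := by rw [← hαm, hm1, hαl]
              cases m; cases l; simp_all [negLit]
            -- use the blocking condition
            obtain ⟨t, ht, hnt⟩ := hblock D hD (hmeq ▸ hm)
            -- α satisfies exactly one of t, negLit t
            have hsat : α t.1 = t.2 ∨ α (negLit t).1 = (negLit t).2 := by
              cases hb : α t.1 <;> cases ht2 : t.2 <;> simp_all [negLit]
            have main : ∀ s : Lit, s ∈ C ∪ D.erase (negLit l) → α s.1 = s.2 →
                ∃ u ∈ D, β u.1 = u.2 := by
              intro s hsmem hsα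
              rcases Finset.mem_union.1 hsmem with hsC | hsD
              · exact absurd hsα (by
                  have := hαfalse s (Finset.mem_insert_of_mem hsC)
                  rw [this]; cases s.2 <;> simp)
              · have hsne : s ≠ negLit l := Finset.ne_of_mem_erase hsD
                have hsD' : s ∈ D := Finset.mem_of_mem_erase hsD
                have hs1 : s.1 ≠ l.1 := by
                  intro hseq
                  rcases Bool.eq_false_or_eq_true s.2 with h2 | h2
                  · rcases Bool.eq_false_or_eq_true l.2 with h3 | h3
                    · -- s = l, but α satisfies s and falsifies l
                      have : s = l := by cases s; cases l; simp_all
                      rw [this] at hsα; rw [hsα] at hαl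
                      simp [h3] at hαl
                    · exact hsne (by cases s; cases l; simp_all [negLit])
                  · rcases Bool.eq_false_or_eq_true l.2 with h3 | h3
                    · exact hsne (by cases s; cases l; simp_all [negLit])
                    · have : s = l := by cases s; cases l; simp_all
                      rw [this] at hsα; rw [hsα] at hαl
                      simp [h3] at hαl
                exact ⟨s, hsD', by rw [hagree s.1 hs1]; exact hsα⟩
            rcases hsat with h1 | h1
            · exact main t ht h1
            · exact main (negLit t) hnt h1
          · exact ⟨m, hm, by rw [hagree m.1 hm1]; exact hαm⟩
      · -- cost does not increase
        apply Finset.card_le_card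
        intro b hb
        simp only [Finset.mem_filter] at hb ⊢
        refine ⟨hb.1, ?_⟩
        by_cases hb1 : b = l.1
        · exfalso
          have hl2 : l.2 = true := by
            have := hb.2; rw [hb1, hβl] at this; exact this
          exact hcost ⟨hl2, hb1 ▸ hb.1⟩
        · rw [← hagree b hb1]; exact hb.2
  -- From key and the subformula property, conclude equality of costs
  set S1 := {k | ∃ α : TAssign, satCNF α Γ ∧ cost B α = k} with hS1
  set S2 := {k | ∃ α : TAssign, satCNF α (insert l C ::ₘ Γ) ∧ cost B α = k} with hS2
  have hsub : S2 ⊆ S1 := by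
    rintro k ⟨α, hα, rfl⟩
    exact ⟨α, fun D hD => hα D (Multiset.mem_cons_of_mem hD), rfl⟩
  by_cases hne : S1.Nonempty
  · obtain ⟨k, hk⟩ := hne
    have hk1 : sInf S1 ∈ S1 := Nat.sInf_mem ⟨k, hk⟩
    obtain ⟨α, hα, hαc⟩ := hk1
    obtain ⟨β, hβ, hβc⟩ := key α hα
    have hne2 : S2.Nonempty := ⟨cost B β, β, hβ, rfl⟩
    have h1 : sInf S1 ≤ sInf S2 := Nat.sInf_le (hsub (Nat.sInf_mem hne2))
    have h2 : sInf S2 ≤ sInf S1 := by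
      calc sInf S2 ≤ cost B β := Nat.sInf_le ⟨β, hβ, rfl⟩
        _ ≤ cost B α := hβc
        _ = sInf S1 := hαc
    exact le_antisymm h1 h2
  · have hne2 : ¬ S2.Nonempty := fun h => hne (h.imp (fun k hk => hsub hk))
    unfold costCNF
    rw [← hS1, ← hS2, Set.not_nonempty_iff_eq_empty.1 hne,
      Set.not_nonempty_iff_eq_empty.1 hne2]

end PaperMaxSAT
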